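/- arXiv:1707.09866 — 3 statements merged into one kernel-verified Lean document; each statement's English description precedes it below -/
import Mathlib

section
/- Let n, k, V be positive integers and let U^1, ..., U^V be real n×k matrices, each with orthonormal columns (i.e., (U^v)ᵀ U^v = I_k for every v). Let Ũ ∈ ℝ^{n×(Vk)} be the horizontal concatenation [U^1 U^2 ⋯ U^V]. Then any real n×k matrix U* with orthonormal columns whose columns are eigenvectors of the symmetric positive semidefinite matrix Ũ Ũᵀ corresponding to its k largest eigenvalues is a minimizer of the objective ∑_{v=1}^V ‖U Uᵀ − U^v (U^v)ᵀ‖_F² over all real n×k matrices U satisfying Uᵀ U = I_k, where ‖·‖_F denotes the Frobenius norm. -/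
open Matrix


private lemma kyfan_aux {n k : ℕ} (hk : 0 < k) (lam : Fin n → ℝ) (s : Fin n → ℝ)
    (hs0 : ∀ i, 0 ≤ s i) (hs1 : ∀ i, s i ≤ 1) (hsum : ∑ i, s i = (k : ℝ))
    (μ : Fin k → ℝ) (g : Fin k → Fin n) (hg : Function.Injective g)
    (hμ : ∀ j, μ j = lam (g j))
    (hle : ∀ i : Fin n, i ∉ Set.range g → ∀ j : Fin k, lam i ≤ μ j) :
    ∑ i, lam i * s i ≤ ∑ j, μ j := by
  haveI : Nonempty (Fin k) := ⟨⟨0, hk⟩⟩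
  set m : ℝ := Finset.univ.inf' Finset.univ_nonempty μ with hm
  have hmle : ∀ j, m ≤ μ j := fun j => Finset.inf'_le _ (Finset.mem_univ j)
  have hlem : ∀ i : Fin n, i ∉ Set.range g → lam i ≤ m := by
    intro i hi
    exact Finset.le_inf' _ _ (fun j _ => hle i hi j)
  set R : Finset (Fin n) := Finset.univ.image g with hR
  have hmem : ∀ i, i ∈ R ↔ i ∈ Set.range g := by
    intro i; simp [hR, Set.mem_range]
  have hcard : R.card = k := by
    rw [hR, Finset.card_image_of_injective _ hg, Finset.card_univ, Fintype.card_fin]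
  have hsumμ : ∑ j, μ j = ∑ i ∈ R, lam i := by
    rw [hR, Finset.sum_image (fun a _ b _ h => hg h)]
    exact Finset.sum_congr rfl fun j _ => hμ j
  rw [hsumμ]
  have hsplit : ∑ i, lam i * s i = ∑ i ∈ R, lam i * s i + ∑ i ∈ Rᶜ, lam i * s i := by
    rw [Finset.sum_add_sum_compl]
  have key : ∑ i ∈ R, lam i * (s i - 1) + ∑ i ∈ Rᶜ, lam i * s i ≤
      ∑ i ∈ R, m * (s i - 1) + ∑ i ∈ Rᶜ, m * s i := by
    apply add_le_add
    · apply Finset.sum_le_sum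
      intro i hi
      have h1 : m ≤ lam i := by
        rw [hmem] at hi
        obtain ⟨j, rfl⟩ := hi
        rw [← hμ j]; exact hmle j
      nlinarith [hs1 i]
    · apply Finset.sum_le_sum
      intro i hi
      have h1 : lam i ≤ m := hlem i (by rw [← hmem]; simpa using hi)
      nlinarith [hs0 i]
  have hrhs : ∑ i ∈ R, m * (s i - 1) + ∑ i ∈ Rᶜ, m * s i = m * (∑ i, s i - k) := by
    simp only [mul_sub, mul_one, Finset.sum_sub_distrib, Finset.sum_const, hcard,
      nsmul_eq_mul]
    rw [← Finset.sum_add_sum_compl R s, mul_add, Finset.mul_sum, Finset.mul_sum]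
    ring
  have := key
  rw [hrhs, hsum, sub_self, mul_zero] at this
  have h2 : ∑ i ∈ R, lam i * (s i - 1) + ∑ i ∈ Rᶜ, lam i * s i
      = ∑ i, lam i * s i - ∑ i ∈ R, lam i := by
    rw [hsplit]
    simp [mul_sub, Finset.sum_sub_distrib]
    ring
  rw [h2] at this
  linarith

private lemma proj_diag_le_one {n k : ℕ} (W : Matrix (Fin n) (Fin k) ℝ) (hW : Wᵀ * W = 1)
    (i : Fin n) : ∑ j, W i j ^ 2 ≤ 1 := by
  set P : Matrix (Fin n) (Fin n) ℝ := W * Wᵀ with hP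
  have hPsymm : ∀ a b, P b a = P a b := by
    intro a b; simp [hP, mul_apply, transpose_apply, mul_comm]
  have hPP : P * P = P := by
    rw [hP, Matrix.mul_assoc, ← Matrix.mul_assoc Wᵀ W, hW, Matrix.one_mul]
  have hPii : P i i = ∑ j, W i j ^ 2 := by
    simp [hP, mul_apply, transpose_apply, sq]
  have h1 : P i i = ∑ j, P i j ^ 2 := by
    conv_lhs => rw [← hPP]
    rw [mul_apply]
    exact Finset.sum_congr rfl fun j _ => by rw [hPsymm i j, sq]
  have h2 : P i i ^ 2 ≤ P i i := by
    conv_rhs => rw [h1]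
    exact Finset.single_le_sum (f := fun j => P i j ^ 2) (fun j _ => sq_nonneg _)
      (Finset.mem_univ i)
  have h0 : 0 ≤ P i i := by rw [hPii]; positivity
  rw [← hPii]
  nlinarith

/-- Expansion of one term of the objective. -/
private lemma obj_term {n k k' : ℕ} (U : Matrix (Fin n) (Fin k) ℝ)
    (A : Matrix (Fin n) (Fin k') ℝ) (hU : Uᵀ * U = 1) (hA : Aᵀ * A = 1) :
    trace ((U * Uᵀ - A * Aᵀ) * (U * Uᵀ - A * Aᵀ)ᵀ)
      = (k : ℝ) + (k' : ℝ) - 2 * trace (U * Uᵀ * (A * Aᵀ)) := by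
  have hXt : (U * Uᵀ - A * Aᵀ)ᵀ = U * Uᵀ - A * Aᵀ := by
    rw [transpose_sub, transpose_mul, transpose_mul, transpose_transpose,
      transpose_transpose]
  rw [hXt]
  have hXX : (U * Uᵀ) * (U * Uᵀ) = U * Uᵀ := by
    rw [Matrix.mul_assoc, ← Matrix.mul_assoc Uᵀ U, hU, Matrix.one_mul]
  have hYY : (A * Aᵀ) * (A * Aᵀ) = A * Aᵀ := by
    rw [Matrix.mul_assoc, ← Matrix.mul_assoc Aᵀ A, hA, Matrix.one_mul]
  have htrX : trace (U * Uᵀ) = (k : ℝ) := by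
    rw [Matrix.trace_mul_comm, hU, Matrix.trace_one]; simp
  have htrY : trace (A * Aᵀ) = (k' : ℝ) := by
    rw [Matrix.trace_mul_comm, hA, Matrix.trace_one]; simp
  have hexp : (U * Uᵀ - A * Aᵀ) * (U * Uᵀ - A * Aᵀ)
      = (U * Uᵀ) * (U * Uᵀ) - (U * Uᵀ) * (A * Aᵀ) - (A * Aᵀ) * (U * Uᵀ)
        + (A * Aᵀ) * (A * Aᵀ) := by
    rw [Matrix.sub_mul, Matrix.mul_sub, Matrix.mul_sub]
    abel
  rw [hexp, trace_add, trace_sub, trace_sub, hXX, hYY, htrX, htrY,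
    Matrix.trace_mul_comm (A * Aᵀ) (U * Uᵀ)]
  ring

/-- Let `U^1, …, U^V` be real `n × k` matrices with orthonormal columns and
let `Ũ = [U^1 U^2 ⋯ U^V] ∈ ℝ^{n × (V·k)}` be their horizontal concatenation (column `j + k·v`
of `Ũ` is column `j` of `U^v`).  Then any real `n × k` matrix `U*` with orthonormal columns
whose columns are eigenvectors of the symmetric PSD matrix `Ũ Ũᵀ` corresponding to its `k`
largest eigenvalues (with multiplicity) minimizes `∑ v ‖U Uᵀ − U^v (U^v)ᵀ‖_F²` over all real
`n × k` matrices `U` with `Uᵀ U = I_k`, where `‖B‖_F² = tr (B Bᵀ)`. -/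
theorem top_eigenvectors_minimize_disagreement
    (n k V : ℕ) (hn : 0 < n) (hk : 0 < k) (hV : 0 < V)
    (Uv : Fin V → Matrix (Fin n) (Fin k) ℝ)
    (hUv : ∀ v, (Uv v)ᵀ * Uv v = 1)
    (tildeU : Matrix (Fin n) (Fin (V * k)) ℝ)
    (htildeU : tildeU = Matrix.of fun i c =>
      Uv (finProdFinEquiv.symm c).1 i (finProdFinEquiv.symm c).2)
    (hH : (tildeU * tildeUᵀ).IsHermitian)
    (Ustar : Matrix (Fin n) (Fin k) ℝ)
    (hUstar : Ustarᵀ * Ustar = 1)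
    -- the columns of `U*` are eigenvectors of `Ũ Ũᵀ` corresponding to its `k` largest
    -- eigenvalues (with multiplicity)
    (heig : ∃ μ : Fin k → ℝ,
      (∀ j : Fin k, (tildeU * tildeUᵀ) *ᵥ (fun i => Ustar i j) = μ j • (fun i => Ustar i j)) ∧
      (∃ g : Fin k → Fin n, Function.Injective g ∧
        (∀ j, μ j = hH.eigenvalues (g j)) ∧
        (∀ i : Fin n, i ∉ Set.range g → ∀ j : Fin k, hH.eigenvalues i ≤ μ j))) :
    ∀ U : Matrix (Fin n) (Fin k) ℝ, Uᵀ * U = 1 →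
      (∑ v, trace ((Ustar * Ustarᵀ - Uv v * (Uv v)ᵀ) * (Ustar * Ustarᵀ - Uv v * (Uv v)ᵀ)ᵀ))
        ≤ (∑ v, trace ((U * Uᵀ - Uv v * (Uv v)ᵀ) * (U * Uᵀ - Uv v * (Uv v)ᵀ)ᵀ)) := by
  intro U hU
  set H : Matrix (Fin n) (Fin n) ℝ := tildeU * tildeUᵀ with hHdef
  obtain ⟨μ, hμeig, g, hg, hμval, hμtop⟩ := heig
  -- H is the sum of the projectors
  have hHsum : H = ∑ v, Uv v * (Uv v)ᵀ := by
    rw [hHdef, htildeU]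
    ext i i'
    simp only [mul_apply, transpose_apply, of_apply, Matrix.sum_apply]
    rw [← Equiv.sum_comp finProdFinEquiv
      (fun c => Uv (finProdFinEquiv.symm c).1 i (finProdFinEquiv.symm c).2 *
        Uv (finProdFinEquiv.symm c).1 i' (finProdFinEquiv.symm c).2)]
    simp only [Equiv.symm_apply_apply]
    rw [Fintype.sum_prod_type]
  -- reduce to comparing trace (X * H)
  have hobj : ∀ W : Matrix (Fin n) (Fin k) ℝ, Wᵀ * W = 1 →
      (∑ v, trace ((W * Wᵀ - Uv v * (Uv v)ᵀ) * (W * Wᵀ - Uv v * (Uv v)ᵀ)ᵀ))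
        = (V : ℝ) * (2 * k) - 2 * trace (W * Wᵀ * H) := by
    intro W hW
    have : ∀ v : Fin V, trace ((W * Wᵀ - Uv v * (Uv v)ᵀ) * (W * Wᵀ - Uv v * (Uv v)ᵀ)ᵀ)
        = (k : ℝ) + (k : ℝ) - 2 * trace (W * Wᵀ * (Uv v * (Uv v)ᵀ)) :=
      fun v => obj_term W (Uv v) hW (hUv v)
    rw [Finset.sum_congr rfl fun v _ => this v]
    rw [Finset.sum_sub_distrib]
    simp only [Finset.sum_const, Finset.card_univ, Fintype.card_fin, nsmul_eq_mul]
    rw [hHsum, Finset.mul_sum, trace_sum, ← Finset.mul_sum]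
    ring
  rw [hobj U hU, hobj Ustar hUstar]
  have hmain : trace (U * Uᵀ * H) ≤ trace (Ustar * Ustarᵀ * H) := by
    -- value at Ustar is ∑ μ
    have hdiagstar : ∀ j : Fin k, ∑ i, Ustar i j * Ustar i j = 1 := by
      intro j
      have := congrArg (fun M => M j j) hUstar
      simpa [mul_apply, transpose_apply, one_apply] using this
    have hstar : trace (Ustar * Ustarᵀ * H) = ∑ j, μ j := by
      rw [Matrix.trace_mul_comm, ← Matrix.mul_assoc]
      -- trace (H * Ustar * Ustarᵀ) ; compute entrywise
      rw [Matrix.trace_mul_comm]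
      -- trace (Ustarᵀ * (H * Ustar))
      rw [Matrix.trace]
      apply Finset.sum_congr rfl
      intro j _
      have hcol : ∀ i, (H * Ustar) i j = μ j * Ustar i j := by
        intro i
        have := congrFun (hμeig j) i
        simpa [Matrix.mulVec, dotProduct, hHdef, mul_apply, Pi.smul_apply,
          smul_eq_mul] using this
      simp only [diag_apply, mul_apply, transpose_apply]
      calc ∑ i, Ustar i j * (H * Ustar) i j
          = ∑ i, μ j * (Ustar i j * Ustar i j) := by
            apply Finset.sum_congr rfl
            intro i _
            rw [hcol i]; ring
        _ = μ j := by rw [← Finset.mul_sum, hdiagstar j, mul_one]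
    rw [hstar]
    -- value at U is at most ∑ μ (Ky Fan)
    set Q : Matrix (Fin n) (Fin n) ℝ := (hH.eigenvectorUnitary : Matrix (Fin n) (Fin n) ℝ)
      with hQ
    have hQQ : Q * star Q = 1 :=
      (Matrix.mem_unitaryGroup_iff).mp (hH.eigenvectorUnitary).2
    have hspec : H = Q * diagonal (RCLike.ofReal ∘ hH.eigenvalues) * star Q :=
      hH.spectral_theorem
    set W : Matrix (Fin n) (Fin k) ℝ := star Q * U with hW
    have hstarQ : star Q = Qᵀ := by
      rw [Matrix.star_eq_conjTranspose, conjTranspose_eq_transpose_of_trivial]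
    have hWt : Wᵀ = Uᵀ * Q := by
      rw [hW, hstarQ, transpose_mul, transpose_transpose]
    have hWW : Wᵀ * W = 1 := by
      rw [hWt, hW, Matrix.mul_assoc, ← Matrix.mul_assoc Q, hQQ, Matrix.one_mul, hU]
    set s : Fin n → ℝ := fun i => ∑ j, W i j ^ 2 with hs
    set D : Matrix (Fin n) (Fin n) ℝ := diagonal (RCLike.ofReal ∘ hH.eigenvalues) with hD
    have htrU : trace (U * Uᵀ * H) = ∑ i, hH.eigenvalues i * s i := by
      have e0 : trace (U * Uᵀ * H) = trace (Uᵀ * H * U) := by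
        rw [Matrix.mul_assoc, Matrix.trace_mul_comm, Matrix.mul_assoc]
      have e1 := congrArg (fun M => trace (Uᵀ * M * U)) hspec
      have e2 : Uᵀ * (Q * D * star Q) * U = Wᵀ * D * W := by
        rw [hWt, hW]
        simp only [Matrix.mul_assoc]
      rw [e0, e1, e2, Matrix.trace]
      simp only [diag_apply, Matrix.mul_apply, Matrix.diagonal_apply, transpose_apply,
        Function.comp, hD, RCLike.ofReal_real_eq_id, id_eq, mul_ite, mul_zero, ite_mul,
        zero_mul, Finset.sum_ite_eq, Finset.sum_ite_eq', Finset.mem_univ, if_true]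
      rw [Finset.sum_comm]
      apply Finset.sum_congr rfl
      intro i _
      rw [hs, Finset.mul_sum]
      apply Finset.sum_congr rfl
      intro j _
      ring
    have hsumk : ∑ i, s i = (k : ℝ) := by
      have ht : trace (Wᵀ * W) = (k : ℝ) := by
        rw [hWW, Matrix.trace_one]; simp
      rw [Matrix.trace] at ht
      simp only [diag_apply, Matrix.mul_apply, transpose_apply] at ht
      rw [← ht, Finset.sum_comm]
      apply Finset.sum_congr rfl
      intro i _
      simp [sq]
    have hs0 : ∀ i, 0 ≤ s i := by intro i; rw [hs]; positivity
    have hs1 : ∀ i, s i ≤ 1 := fun i => proj_diag_le_one W hWW i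
    rw [htrU]
    exact kyfan_aux hk hH.eigenvalues s hs0 hs1 hsumk μ g hg hμval hμtop
  linarith
end

section
/- Let M be a real symmetric n×n matrix and let k ≤ n. Then the maximum of tr(Uᵀ M U) over all real n×k matrices U with orthonormal columns (Uᵀ U = I_k) equals the sum of the k largest eigenvalues of M, and this maximum is attained when the columns of U are orthonormal eigenvectors of M corresponding to its k largest eigenvalues. -/
open Matrix

/-- Abel-type bound: if `a` is antitone and `0 ≤ c ≤ 1` with `∑ c = k`, then
`∑ a i * c i ≤ ∑_{j < k} a j`. -/
lemma kyFan_sum_aux (n k : ℕ) (hkn : k ≤ n) (a c : Fin n → ℝ)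
    (ha : Antitone a) (hc0 : ∀ i, 0 ≤ c i) (hc1 : ∀ i, c i ≤ 1)
    (hsum : ∑ i, c i = (k : ℝ)) :
    ∑ i, a i * c i ≤ ∑ j : Fin k, a (Fin.castLE hkn j) := by
  rcases Nat.eq_zero_or_pos k with hk0 | hkpos
  · subst hk0
    have hz : ∀ i ∈ Finset.univ, c i = 0 := by
      rw [← Finset.sum_eq_zero_iff_of_nonneg (fun i _ => hc0 i)]
      simpa using hsum
    simp only [Finset.univ_eq_empty, Finset.sum_empty]
    calc ∑ i, a i * c i = ∑ i, a i * 0 := by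
          apply Finset.sum_congr rfl; intro i hi; rw [hz i hi]
      _ = 0 := by simp
      _ ≤ 0 := le_rfl
  · have hkn' : k - 1 < n := lt_of_lt_of_le (Nat.sub_lt hkpos one_pos) hkn
    set t : ℝ := a ⟨k - 1, hkn'⟩ with ht
    -- rewrite the RHS as a full sum with indicator
    have hT : ∑ j : Fin k, a (Fin.castLE hkn j)
        = ∑ i : Fin n, (if (i : ℕ) < k then a i else 0) := by
      rw [← Finset.sum_filter]
      have hm := Finset.sum_map Finset.univ ⟨Fin.castLE hkn, Fin.castLE_injective hkn⟩ a
      simp only [Function.Embedding.coeFn_mk] at hm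
      rw [← hm]
      congr 1
      ext i
      simp only [Finset.mem_map, Finset.mem_univ, true_and, Finset.mem_filter,
        Function.Embedding.coeFn_mk]
      constructor
      · rintro ⟨j, rfl⟩; exact j.isLt
      · intro hi; exact ⟨⟨(i : ℕ), hi⟩, by ext; simp⟩
    have hind : ∑ i : Fin n, (if (i : ℕ) < k then (1 : ℝ) else 0) = (k : ℝ) := by
      rw [Finset.sum_boole]
      congr 1
      have : (Finset.filter (fun i : Fin n => (i : ℕ) < k) Finset.univ)
          = Finset.map ⟨Fin.castLE hkn, Fin.castLE_injective hkn⟩ Finset.univ := by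
        ext i
        simp only [Finset.mem_map, Finset.mem_univ, true_and, Finset.mem_filter,
          Function.Embedding.coeFn_mk]
        constructor
        · intro hi; exact ⟨⟨(i : ℕ), hi⟩, by ext; simp⟩
        · rintro ⟨j, rfl⟩; exact j.isLt
      rw [this, Finset.card_map, Finset.card_univ, Fintype.card_fin]
    have key : ∀ i : Fin n, a i * c i - (if (i : ℕ) < k then a i else 0)
        ≤ t * (c i - (if (i : ℕ) < k then (1 : ℝ) else 0)) := by
      intro i
      by_cases h : (i : ℕ) < k
      · simp only [h, if_true]
        have hat : t ≤ a i := ha (show i ≤ (⟨k - 1, hkn'⟩ : Fin n) by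
          rw [Fin.le_def]; simp only [Fin.val_mk]; omega)
        nlinarith [hc1 i]
      · simp only [h, if_false]
        have hat : a i ≤ t := ha (show (⟨k - 1, hkn'⟩ : Fin n) ≤ i by
          rw [Fin.le_def]; simp only [Fin.val_mk]; omega)
        nlinarith [hc0 i]
    have hle : ∑ i, a i * c i - ∑ i : Fin n, (if (i : ℕ) < k then a i else 0) ≤ 0 := by
      rw [← Finset.sum_sub_distrib]
      calc ∑ i, (a i * c i - (if (i : ℕ) < k then a i else 0))
          ≤ ∑ i, t * (c i - (if (i : ℕ) < k then (1 : ℝ) else 0)) :=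
            Finset.sum_le_sum (fun i _ => key i)
        _ = t * ((∑ i, c i) - ∑ i : Fin n, (if (i : ℕ) < k then (1 : ℝ) else 0)) := by
            rw [← Finset.mul_sum, Finset.sum_sub_distrib]
        _ = 0 := by rw [hsum, hind]; ring
    rw [hT]; linarith

/-- If two finsets of the same cardinality both consist of "maximal" values of `f`,
their `f`-sums agree. -/
lemma kyFan_topset_aux {α : Type*} [DecidableEq α] (f : α → ℝ) (S T : Finset α)
    (hcard : S.card = T.card)
    (hS : ∀ x ∉ S, ∀ y ∈ S, f x ≤ f y)
    (hT : ∀ x ∉ T, ∀ y ∈ T, f x ≤ f y) :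
    ∑ x ∈ S, f x = ∑ x ∈ T, f x := by
  have hST : (S \ T).card = (T \ S).card := by
    have h1 := Finset.card_sdiff_add_card_inter S T
    have h2 := Finset.card_sdiff_add_card_inter T S
    rw [Finset.inter_comm] at h2
    omega
  have hsum : ∑ x ∈ S \ T, f x = ∑ x ∈ T \ S, f x := by
    rcases (S \ T).eq_empty_or_nonempty with h | ⟨x₀, hx₀⟩
    · have h' : (T \ S) = ∅ := Finset.card_eq_zero.mp (by rw [← hST, h]; simp)
      rw [h, h']
    · have hTS : (T \ S).Nonempty := Finset.card_pos.mp (hST ▸ Finset.card_pos.mpr ⟨x₀, hx₀⟩)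
      obtain ⟨y₀, hy₀⟩ := hTS
      have hx₀' := Finset.mem_sdiff.mp hx₀
      have hy₀' := Finset.mem_sdiff.mp hy₀
      have const1 : ∀ x ∈ S \ T, f x = f y₀ := by
        intro x hx
        have hx' := Finset.mem_sdiff.mp hx
        exact le_antisymm (hT x hx'.2 y₀ hy₀'.1) (hS y₀ hy₀'.2 x hx'.1)
      have const2 : ∀ y ∈ T \ S, f y = f y₀ := by
        intro y hy
        have hy' := Finset.mem_sdiff.mp hy
        have h1 := hS y hy'.2 x₀ hx₀'.1
        have h2 := hT x₀ hx₀'.2 y hy'.1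
        have h3 := const1 x₀ hx₀
        linarith
      rw [Finset.sum_congr rfl const1, Finset.sum_congr rfl const2,
        Finset.sum_const, Finset.sum_const, hST]
  have e1 := Finset.sum_inter_add_sum_sdiff S T f
  have e2 := Finset.sum_inter_add_sum_sdiff T S f
  rw [Finset.inter_comm] at e2
  linarith

/-- Trace formula when columns are eigenvectors. -/
lemma kyFan_trace_aux (n k : ℕ) (M : Matrix (Fin n) (Fin n) ℝ)
    (U : Matrix (Fin n) (Fin k) ℝ) (hU : Uᵀ * U = 1) (μ : Fin k → ℝ)
    (hcol : ∀ j : Fin k, M *ᵥ (fun i => U i j) = μ j • (fun i => U i j)) :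
    trace (Uᵀ * M * U) = ∑ j, μ j := by
  unfold trace
  apply Finset.sum_congr rfl
  intro j _
  have hMU : ∀ i, (M * U) i j = μ j * U i j := by
    intro i
    have := congrFun (hcol j) i
    simpa [mulVec, dotProduct, mul_apply] using this
  have hdiag : (Uᵀ * U) j j = 1 := by rw [hU]; simp
  calc (Uᵀ * M * U).diag j = ∑ i, U i j * (M * U) i j := by
        rw [Matrix.mul_assoc]; simp only [diag, mul_apply, transpose_apply]
    _ = μ j * ∑ i, U i j * U i j := by
        rw [Finset.mul_sum]; apply Finset.sum_congr rfl; intro i _; rw [hMU i]; ring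
    _ = μ j := by
        have : ∑ i, U i j * U i j = 1 := by
          simpa [mul_apply, transpose_apply] using hdiag
        rw [this, mul_one]

/-- **Ky Fan / Rayleigh–Ritz.** For a real symmetric `n × n` matrix `M` and
`k ≤ n`, the maximum of `tr (Uᵀ M U)` over real `n × k` matrices `U` with orthonormal columns
(`Uᵀ U = I_k`) equals the sum of the `k` largest eigenvalues of `M` (the eigenvalues being
enumerated in any nonincreasing order), and the maximum is attained whenever the columns of
`U` are orthonormal eigenvectors of `M` corresponding to its `k` largest eigenvalues. -/
theorem trace_max_eq_sum_k_largest_eigenvalues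
    (n k : ℕ) (hkn : k ≤ n)
    (M : Matrix (Fin n) (Fin n) ℝ) (hM : M.IsHermitian)
    (e : Equiv.Perm (Fin n)) (he : Antitone (fun i => hM.eigenvalues (e i))) :
    IsGreatest
      {t : ℝ | ∃ U : Matrix (Fin n) (Fin k) ℝ, Uᵀ * U = 1 ∧ t = trace (Uᵀ * M * U)}
      (∑ j : Fin k, hM.eigenvalues (e (Fin.castLE hkn j)))
    ∧ (∀ U : Matrix (Fin n) (Fin k) ℝ, Uᵀ * U = 1 →
        -- the columns of `U` are eigenvectors of `M` corresponding to its `k` largest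
        -- eigenvalues (with multiplicity)
        (∃ μ : Fin k → ℝ,
          (∀ j : Fin k, M *ᵥ (fun i => U i j) = μ j • (fun i => U i j)) ∧
          (∃ g : Fin k → Fin n, Function.Injective g ∧
            (∀ j, μ j = hM.eigenvalues (g j)) ∧
            (∀ i : Fin n, i ∉ Set.range g → ∀ j : Fin k, hM.eigenvalues i ≤ μ j))) →
        trace (Uᵀ * M * U) = ∑ j : Fin k, hM.eigenvalues (e (Fin.castLE hkn j))) := by
  set lam := hM.eigenvalues with hlam
  -- the eigenvector matrix
  set V : Matrix (Fin n) (Fin n) ℝ := fun i j => hM.eigenvectorBasis j i with hV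
  have hVorth : Vᵀ * V = 1 := by
    ext j j'
    have h := orthonormal_iff_ite.mp hM.eigenvectorBasis.orthonormal j j'
    simp only [mul_apply, transpose_apply, hV, one_apply]
    show ∑ l, hM.eigenvectorBasis j l * hM.eigenvectorBasis j' l = _
    simpa [PiLp.inner_apply, RCLike.inner_apply, mul_comm] using h
  have hVVt : V * Vᵀ = 1 := mul_eq_one_comm.mp hVorth
  have hMV : M * V = V * diagonal lam := by
    ext i j
    have h := congrFun (hM.mulVec_eigenvectorBasis j) i
    simp only [mulVec, dotProduct, Pi.smul_apply, smul_eq_mul] at h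
    rw [Matrix.mul_apply, Matrix.mul_diagonal]
    simp only [hV]
    rw [h, hlam]
    ring
  have hspec : M = V * diagonal lam * Vᵀ := by
    calc M = M * (V * Vᵀ) := by rw [hVVt, mul_one]
      _ = (M * V) * Vᵀ := by rw [mul_assoc]
      _ = V * diagonal lam * Vᵀ := by rw [hMV]
  -- the top-k eigenvector matrix used to attain the maximum
  set U₀ : Matrix (Fin n) (Fin k) ℝ := fun i j => V i (e (Fin.castLE hkn j)) with hU₀def
  have hU₀orth : U₀ᵀ * U₀ = 1 := by
    ext j j'
    have h := congrFun (congrFun hVorth (e (Fin.castLE hkn j))) (e (Fin.castLE hkn j'))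
    simp only [mul_apply, transpose_apply, one_apply] at h ⊢
    rw [h]
    by_cases hjj : j = j'
    · simp [hjj]
    · have : e (Fin.castLE hkn j) ≠ e (Fin.castLE hkn j') := by
        intro hc
        exact hjj (Fin.castLE_injective hkn (e.injective hc))
      simp [this, hjj]
  have hU₀col : ∀ j : Fin k, M *ᵥ (fun i => U₀ i j) = lam (e (Fin.castLE hkn j)) •
      (fun i => U₀ i j) := by
    intro j
    have := hM.mulVec_eigenvectorBasis (e (Fin.castLE hkn j))
    convert this using 2
  have hmem : trace (U₀ᵀ * M * U₀) = ∑ j : Fin k, lam (e (Fin.castLE hkn j)) :=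
    kyFan_trace_aux n k M U₀ hU₀orth _ hU₀col
  -- upper bound
  have hub : ∀ U : Matrix (Fin n) (Fin k) ℝ, Uᵀ * U = 1 →
      trace (Uᵀ * M * U) ≤ ∑ j : Fin k, lam (e (Fin.castLE hkn j)) := by
    intro U hU
    set W : Matrix (Fin n) (Fin k) ℝ := Vᵀ * U with hW
    have hWW : Wᵀ * W = 1 := by
      rw [hW, transpose_mul, transpose_transpose, ← Matrix.mul_assoc,
        Matrix.mul_assoc Uᵀ V Vᵀ, hVVt, Matrix.mul_one, hU]
    set Q : Matrix (Fin n) (Fin n) ℝ := W * Wᵀ with hQ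
    have hQidem : Q * Q = Q := by
      calc Q * Q = W * ((Wᵀ * W) * Wᵀ) := by
            rw [hQ, Matrix.mul_assoc W Wᵀ (W * Wᵀ), ← Matrix.mul_assoc Wᵀ W Wᵀ]
        _ = Q := by rw [hWW, Matrix.one_mul, ← hQ]
    have hQsymm : Qᵀ = Q := by rw [hQ, transpose_mul, transpose_transpose]
    set c : Fin n → ℝ := fun i => Q i i with hc
    have hc0 : ∀ i, 0 ≤ c i := by
      intro i
      have : c i = ∑ j, W i j * W i j := by simp [hc, hQ, mul_apply, transpose_apply]
      rw [this]
      exact Finset.sum_nonneg (fun j _ => mul_self_nonneg _)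
    have hcsq : ∀ i, c i * c i ≤ c i := by
      intro i
      have h1 : c i = ∑ l, Q i l * Q i l := by
        have hii := congrFun (congrFun hQidem i) i
        calc c i = (Q * Q) i i := hii.symm
          _ = ∑ l, Q i l * Q i l := by
              simp only [mul_apply]
              refine Finset.sum_congr rfl (fun l _ => ?_)
              have hq : Q l i = Q i l := congrFun (congrFun hQsymm i) l
              rw [hq]
      have h2 : Q i i * Q i i ≤ ∑ l, Q i l * Q i l :=
        Finset.single_le_sum (f := fun l => Q i l * Q i l)
          (fun l _ => mul_self_nonneg _) (Finset.mem_univ i)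
      calc c i * c i = Q i i * Q i i := rfl
        _ ≤ ∑ l, Q i l * Q i l := h2
        _ = c i := h1.symm
    have hc1 : ∀ i, c i ≤ 1 := fun i => by nlinarith [hcsq i, hc0 i]
    have hcsum : ∑ i, c i = (k : ℝ) := by
      have h1 : ∑ i, c i = trace Q := rfl
      rw [h1, hQ, trace_mul_comm, hWW]
      simp
    have htr : trace (Uᵀ * M * U) = ∑ i, lam i * c i := by
      have h1 : Uᵀ * M * U = Wᵀ * (diagonal lam * W) := by
        rw [hW, transpose_mul, transpose_transpose, hspec]
        simp only [Matrix.mul_assoc]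
      rw [h1, trace_mul_comm, Matrix.mul_assoc, ← hQ]
      simp only [trace, diag, mul_apply, diagonal_apply]
      apply Finset.sum_congr rfl
      intro i _
      rw [Finset.sum_eq_single i]
      · simp [hc]
      · intro b _ hb; simp [Ne.symm hb]
      · intro h; exact absurd (Finset.mem_univ i) h
    rw [htr]
    have hre : ∑ i, lam i * c i = ∑ i, lam (e i) * c (e i) :=
      (Equiv.sum_comp e (fun i => lam i * c i)).symm
    rw [hre]
    exact kyFan_sum_aux n k hkn (fun i => lam (e i)) (fun i => c (e i)) he
      (fun i => hc0 _) (fun i => hc1 _)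
      (by rw [Equiv.sum_comp e c]; exact hcsum)
  constructor
  · constructor
    · exact ⟨U₀, hU₀orth, hmem.symm⟩
    · rintro t ⟨U, hU, rfl⟩
      exact hub U hU
  · rintro U hU ⟨μ, hcol, g, hg, hμ, hmin⟩
    have htr : trace (Uᵀ * M * U) = ∑ j, μ j := kyFan_trace_aux n k M U hU μ hcol
    rw [htr]
    have hμ' : ∑ j, μ j = ∑ j, lam (g j) := Finset.sum_congr rfl (fun j _ => hμ j)
    rw [hμ']
    -- compare the two index sets
    set S : Finset (Fin n) := Finset.map ⟨g, hg⟩ Finset.univ with hS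
    set T : Finset (Fin n) := Finset.map
      ⟨fun j => e (Fin.castLE hkn j),
        fun a b hab => Fin.castLE_injective hkn (e.injective hab)⟩ Finset.univ with hT
    have h1 : ∑ j, lam (g j) = ∑ x ∈ S, lam x := by
      rw [hS, Finset.sum_map]; simp
    have h2 : ∑ j : Fin k, lam (e (Fin.castLE hkn j)) = ∑ x ∈ T, lam x := by
      rw [hT, Finset.sum_map]; rfl
    rw [h1, h2]
    apply kyFan_topset_aux
    · simp [hS, hT]
    · intro x hx y hy
      simp only [hS, Finset.mem_map, Finset.mem_univ, true_and,
        Function.Embedding.coeFn_mk] at hx hy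
      obtain ⟨j, rfl⟩ := hy
      have hxr : x ∉ Set.range g := by
        intro ⟨j', hj'⟩; exact hx ⟨j', hj'⟩
      calc lam x ≤ μ j := hmin x hxr j
        _ = lam (g j) := hμ j
    · intro x hx y hy
      simp only [hT, Finset.mem_map, Finset.mem_univ, true_and,
        Function.Embedding.coeFn_mk] at hx hy
      obtain ⟨j, rfl⟩ := hy
      have hxk : ¬ ((e.symm x : ℕ) < k) := by
        intro hc
        refine hx ⟨⟨(e.symm x : ℕ), hc⟩, ?_⟩
        show e (Fin.castLE hkn ⟨(e.symm x : ℕ), hc⟩) = x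
        rw [show Fin.castLE hkn ⟨(e.symm x : ℕ), hc⟩ = e.symm x from Fin.ext rfl]
        exact e.apply_symm_apply x
      have hle : Fin.castLE hkn j ≤ e.symm x := by
        apply Fin.le_def.mpr
        simp only [Fin.coe_castLE]
        omega
      have := he hle
      show lam x ≤ lam (e (Fin.castLE hkn j))
      simpa using this
end

section
/- Let n, k, V be positive integers, let U^1, ..., U^V be real n×k matrices each with orthonormal columns, and let Ũ = [U^1 U^2 ⋯ U^V] ∈ ℝ^{n×(Vk)} be their horizontal concatenation. Then the minimum value of ∑_{v=1}^V ‖U Uᵀ − U^v (U^v)ᵀ‖_F² over all real n×k matrices U with Uᵀ U = I_k equals 2·V·k − 2·(sum of the k largest eigenvalues of Ũ Ũᵀ). -/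
open Matrix

private lemma myFilter_eq_map {n k : ℕ} (h : k ≤ n) :
    Finset.univ.filter (fun i : Fin n => (i : ℕ) < k)
      = Finset.univ.map (Fin.castLEEmb h) := by
  ext i
  simp only [Finset.mem_filter, Finset.mem_univ, true_and, Finset.mem_map,
    Fin.castLEEmb, Function.Embedding.coeFn_mk]
  constructor
  · intro hi; exact ⟨⟨i, hi⟩, rfl⟩
  · rintro ⟨j, rfl⟩; simpa using j.isLt

private lemma diag_tmul_nonneg {m p : ℕ} (B : Matrix (Fin m) (Fin p) ℝ) (i : Fin p) :
    0 ≤ (Bᵀ * B) i i := by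
  rw [Matrix.mul_apply]
  exact Finset.sum_nonneg fun j _ => mul_self_nonneg _

private lemma keyComb (n k : ℕ) (μ c : Fin n → ℝ) (hmono : Antitone μ) (hμ0 : ∀ i, 0 ≤ μ i)
    (hc0 : ∀ i, 0 ≤ c i) (hc1 : ∀ i, c i ≤ 1) (hsum : ∑ i, c i = (k : ℝ)) :
    ∑ i, μ i * c i ≤ ∑ i ∈ Finset.univ.filter (fun i : Fin n => (i : ℕ) < k), μ i := by
  by_cases hkn : n ≤ k
  · have hfilt : Finset.univ.filter (fun i : Fin n => (i : ℕ) < k) = Finset.univ := by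
      ext i; simp [lt_of_lt_of_le i.isLt hkn]
    rw [hfilt]
    calc ∑ i, μ i * c i ≤ ∑ i, μ i * 1 :=
          Finset.sum_le_sum fun i _ => mul_le_mul_of_nonneg_left (hc1 i) (hμ0 i)
      _ = ∑ i, μ i := by simp
  · push_neg at hkn
    set F := Finset.univ.filter (fun i : Fin n => (i : ℕ) < k) with hF
    set τ := μ ⟨k, hkn⟩ with hτ
    have hcard : ((F.card : ℝ)) = k := by
      rw [hF, myFilter_eq_map hkn.le]; simp
    have key : ∑ i, (μ i - τ) * c i ≤ ∑ i ∈ F, (μ i - τ) := by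
      rw [← Finset.sum_filter_add_sum_filter_not Finset.univ (fun i : Fin n => (i : ℕ) < k)
        (fun i => (μ i - τ) * c i)]
      have h1 : ∑ i ∈ F, (μ i - τ) * c i ≤ ∑ i ∈ F, (μ i - τ) := by
        apply Finset.sum_le_sum
        intro i hi
        rw [hF, Finset.mem_filter] at hi
        have hτμ : τ ≤ μ i := hmono (Fin.le_def.mpr (by simpa using hi.2.le))
        nlinarith [hc0 i, hc1 i]
      have h2 : ∑ i ∈ Finset.univ.filter (fun i : Fin n => ¬ (i : ℕ) < k), (μ i - τ) * c i ≤ 0 := by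
        apply Finset.sum_nonpos
        intro i hi
        rw [Finset.mem_filter] at hi
        have hμτ : μ i ≤ τ := hmono (Fin.le_def.mpr (by simpa using hi.2))
        nlinarith [hc0 i]
      rw [← hF]
      linarith
    have expand1 : ∑ i, (μ i - τ) * c i = ∑ i, μ i * c i - τ * k := by
      simp only [sub_mul]
      rw [Finset.sum_sub_distrib, ← Finset.mul_sum, hsum]
    have expand2 : ∑ i ∈ F, (μ i - τ) = ∑ i ∈ F, μ i - τ * k := by
      rw [Finset.sum_sub_distrib, Finset.sum_const, nsmul_eq_mul, hcard]
      ring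
    rw [expand1, expand2] at key
    linarith

/-- Let `U^1, …, U^V` be real `n × k` matrices with orthonormal columns and
let `Ũ = [U^1 U^2 ⋯ U^V] ∈ ℝ^{n × (V·k)}` be their horizontal concatenation.  Then the minimum
of `∑ v ‖U Uᵀ − U^v (U^v)ᵀ‖_F²` over all real `n × k` matrices `U` with `Uᵀ U = I_k` equals
`2·V·k − 2·(sum of the k largest eigenvalues of Ũ Ũᵀ)`, where the eigenvalues of `Ũ Ũᵀ` are
enumerated in any nonincreasing order and `‖B‖_F² = tr (B Bᵀ)`. -/
theorem min_disagreement_eq_two_Vk_sub_two_sum_k_largest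
    (n k V : ℕ) (hn : 0 < n) (hk : 0 < k) (hV : 0 < V)
    (Uv : Fin V → Matrix (Fin n) (Fin k) ℝ)
    (hUv : ∀ v, (Uv v)ᵀ * Uv v = 1)
    (tildeU : Matrix (Fin n) (Fin (V * k)) ℝ)
    (htildeU : tildeU = Matrix.of fun i c =>
      Uv (finProdFinEquiv.symm c).1 i (finProdFinEquiv.symm c).2)
    (hH : (tildeU * tildeUᵀ).IsHermitian)
    (e : Equiv.Perm (Fin n)) (he : Antitone (fun i => hH.eigenvalues (e i))) :
    IsLeast
      {t : ℝ | ∃ U : Matrix (Fin n) (Fin k) ℝ, Uᵀ * U = 1 ∧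
        t = ∑ v, trace ((U * Uᵀ - Uv v * (Uv v)ᵀ) * (U * Uᵀ - Uv v * (Uv v)ᵀ)ᵀ)}
      (2 * (V : ℝ) * (k : ℝ)
        - 2 * ∑ i ∈ Finset.univ.filter (fun i : Fin n => (i : ℕ) < k), hH.eigenvalues (e i)) := by
  classical
  set A := tildeU * tildeUᵀ with hA
  set W : Matrix (Fin n) (Fin n) ℝ := (hH.eigenvectorUnitary : Matrix (Fin n) (Fin n) ℝ)
    with hWdef
  set lam := hH.eigenvalues with hlam
  have hstarW : star W = Wᵀ := by
    rw [Matrix.star_eq_conjTranspose, conjTranspose_eq_transpose_of_trivial]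
  have hW1 : Wᵀ * W = 1 := by
    rw [← hstarW]; exact mem_unitaryGroup_iff'.mp hH.eigenvectorUnitary.2
  have hW2 : W * Wᵀ = 1 := by
    rw [← hstarW]; exact mem_unitaryGroup_iff.mp hH.eigenvectorUnitary.2
  have spec : A = W * diagonal lam * Wᵀ := by
    have h := hH.spectral_theorem
    rw [Unitary.conjStarAlgAut_apply, ← hWdef, hstarW] at h
    have h2 : (RCLike.ofReal ∘ hH.eigenvalues : Fin n → ℝ) = lam := by
      ext i; simp [hlam]
    rw [h2] at h
    exact h
  have hPSD : A.PosSemidef := by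
    have h := posSemidef_self_mul_conjTranspose tildeU
    rwa [conjTranspose_eq_transpose_of_trivial] at h
  have hμ0 : ∀ i, 0 ≤ lam i := fun i => hPSD.eigenvalues_nonneg i
  have hsplit : A = ∑ v, Uv v * (Uv v)ᵀ := by
    ext i j
    have h1 : A i j = ∑ c : Fin (V * k),
        Uv (finProdFinEquiv.symm c).1 i (finProdFinEquiv.symm c).2
          * Uv (finProdFinEquiv.symm c).1 j (finProdFinEquiv.symm c).2 := by
      rw [hA, htildeU]; simp [mul_apply]
    rw [h1, Equiv.sum_comp finProdFinEquiv.symm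
      (fun p : Fin V × Fin k => Uv p.1 i p.2 * Uv p.1 j p.2)]
    rw [Fintype.sum_prod_type]
    simp [Matrix.sum_apply, mul_apply, transpose_apply]
  -- reduction of the objective
  have hred : ∀ U : Matrix (Fin n) (Fin k) ℝ, Uᵀ * U = 1 →
      (∑ v, trace ((U * Uᵀ - Uv v * (Uv v)ᵀ) * (U * Uᵀ - Uv v * (Uv v)ᵀ)ᵀ))
        = 2 * (V : ℝ) * (k : ℝ) - 2 * trace (A * (U * Uᵀ)) := by
    intro U hU
    have hPP : U * Uᵀ * (U * Uᵀ) = U * Uᵀ := by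
      rw [Matrix.mul_assoc U Uᵀ (U * Uᵀ), ← Matrix.mul_assoc Uᵀ U Uᵀ, hU, Matrix.one_mul]
    have htrP : trace (U * Uᵀ) = (k : ℝ) := by
      rw [trace_mul_comm, hU, trace_one]; simp
    have step : ∀ v, trace ((U * Uᵀ - Uv v * (Uv v)ᵀ) * (U * Uᵀ - Uv v * (Uv v)ᵀ)ᵀ)
        = 2 * (k : ℝ) - 2 * trace ((Uv v * (Uv v)ᵀ) * (U * Uᵀ)) := by
      intro v
      have hPPv : Uv v * (Uv v)ᵀ * (Uv v * (Uv v)ᵀ) = Uv v * (Uv v)ᵀ := by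
        rw [Matrix.mul_assoc (Uv v) (Uv v)ᵀ (Uv v * (Uv v)ᵀ),
          ← Matrix.mul_assoc (Uv v)ᵀ (Uv v) (Uv v)ᵀ, hUv v, Matrix.one_mul]
      have htrPv : trace (Uv v * (Uv v)ᵀ) = (k : ℝ) := by
        rw [trace_mul_comm, hUv v, trace_one]; simp
      have h1 : (U * Uᵀ - Uv v * (Uv v)ᵀ)ᵀ = U * Uᵀ - Uv v * (Uv v)ᵀ := by
        simp [transpose_sub, transpose_mul]
      rw [h1, sub_mul, mul_sub, mul_sub, trace_sub, trace_sub, trace_sub, hPP, hPPv,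
        htrP, htrPv, trace_mul_comm (U * Uᵀ) (Uv v * (Uv v)ᵀ)]
      ring
    calc (∑ v, trace ((U * Uᵀ - Uv v * (Uv v)ᵀ) * (U * Uᵀ - Uv v * (Uv v)ᵀ)ᵀ))
        = ∑ v : Fin V, (2 * (k : ℝ) - 2 * trace ((Uv v * (Uv v)ᵀ) * (U * Uᵀ))) :=
          Finset.sum_congr rfl fun v _ => step v
      _ = (V : ℝ) * (2 * (k : ℝ)) - 2 * ∑ v, trace ((Uv v * (Uv v)ᵀ) * (U * Uᵀ)) := by
          rw [Finset.sum_sub_distrib, Finset.sum_const, ← Finset.mul_sum]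
          simp [nsmul_eq_mul]
      _ = 2 * (V : ℝ) * (k : ℝ) - 2 * trace (A * (U * Uᵀ)) := by
          rw [hsplit, Finset.sum_mul, trace_sum]
          ring
  -- key facts for the upper bound on trace (A * P)
  have hdiagtr : ∀ M : Matrix (Fin n) (Fin n) ℝ,
      trace (diagonal lam * M) = ∑ i, lam i * M i i := by
    intro M
    simp [trace, diag, mul_apply, diagonal]
  have hbound : ∀ U : Matrix (Fin n) (Fin k) ℝ, Uᵀ * U = 1 →
      trace (A * (U * Uᵀ)) ≤
        ∑ i ∈ Finset.univ.filter (fun i : Fin n => (i : ℕ) < k), lam (e i) := by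
    intro U hU
    set P := U * Uᵀ with hPdef
    have hPsym : Pᵀ = P := by simp [hPdef, transpose_mul]
    have hPP : P * P = P := by
      rw [hPdef, Matrix.mul_assoc U Uᵀ (U * Uᵀ), ← Matrix.mul_assoc Uᵀ U Uᵀ, hU, Matrix.one_mul]
    have hfacgen : ∀ Q : Matrix (Fin n) (Fin n) ℝ, Qᵀ = Q → Q * Q = Q →
        (Q * W)ᵀ * (Q * W) = Wᵀ * Q * W := by
      intro Q hQs hQQ
      rw [transpose_mul, hQs, mul_assoc, ← mul_assoc Q Q W, hQQ, ← mul_assoc]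
    have hd0 : ∀ i, 0 ≤ (Wᵀ * P * W) i i := by
      intro i
      rw [← hfacgen P hPsym hPP]
      exact diag_tmul_nonneg _ i
    have hQs : (1 - P)ᵀ = 1 - P := by rw [transpose_sub, transpose_one, hPsym]
    have hQQ : (1 - P) * (1 - P) = 1 - P := by
      rw [sub_mul, one_mul, mul_sub, mul_one, hPP]
      abel
    have hd1 : ∀ i, (Wᵀ * P * W) i i ≤ 1 := by
      intro i
      have h2 : 0 ≤ (Wᵀ * (1 - P) * W) i i := by
        rw [← hfacgen (1 - P) hQs hQQ]
        exact diag_tmul_nonneg _ i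
      have h3 : (Wᵀ * (1 - P) * W) i i = 1 - (Wᵀ * P * W) i i := by
        have h4 : Wᵀ * (1 - P) * W = Wᵀ * W - Wᵀ * P * W := by
          rw [mul_sub, mul_one, sub_mul]
        rw [h4, hW1, Matrix.sub_apply, one_apply_eq]
      linarith
    have hsum' : ∑ i, (Wᵀ * P * W) i i = (k : ℝ) := by
      have h5 : ∑ i, (Wᵀ * P * W) i i = trace (Wᵀ * P * W) := rfl
      rw [h5, trace_mul_cycle, hW2, Matrix.one_mul, hPdef, trace_mul_comm, hU, trace_one]
      simp
    have htrAP : trace (A * P) = ∑ i, lam i * ((Wᵀ * P * W) i i) := by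
      rw [spec, show W * diagonal lam * Wᵀ * P = W * diagonal lam * (Wᵀ * P) from
        by rw [mul_assoc], trace_mul_cycle, trace_mul_comm, hdiagtr]
    have hkey := keyComb n k (fun i => lam (e i)) (fun i => (Wᵀ * P * W) (e i) (e i)) he
      (fun i => hμ0 (e i)) (fun i => hd0 (e i)) (fun i => hd1 (e i))
      (by rw [Equiv.sum_comp e (fun i => (Wᵀ * P * W) i i)]; exact hsum')
    calc trace (A * P) = ∑ i, lam i * (Wᵀ * P * W) i i := htrAP
      _ = ∑ i, lam (e i) * (Wᵀ * P * W) (e i) (e i) :=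
          (Equiv.sum_comp e (fun i => lam i * (Wᵀ * P * W) i i)).symm
      _ ≤ _ := hkey
  -- construction of the optimal U
  have hkn : k ≤ n := by
    have h1 : ((Uv ⟨0, hV⟩)ᵀ * Uv ⟨0, hV⟩).rank ≤ n :=
      le_trans (rank_mul_le_right _ _) (rank_le_height _)
    rw [hUv, rank_one] at h1
    simpa using h1
  set U₀ : Matrix (Fin n) (Fin k) ℝ :=
    Matrix.of (fun i j => W i (e (Fin.castLE hkn j))) with hU₀def
  have hU₀ : U₀ᵀ * U₀ = 1 := by
    ext j j'
    have h1 : (U₀ᵀ * U₀) j j' = (Wᵀ * W) (e (Fin.castLE hkn j)) (e (Fin.castLE hkn j')) := by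
      simp [mul_apply, hU₀def]
    have hinj : (e (Fin.castLE hkn j) = e (Fin.castLE hkn j')) ↔ j = j' := by
      constructor
      · intro h
        have h6 := e.injective h
        exact Fin.ext (by simpa using congrArg Fin.val h6)
      · rintro rfl; rfl
    rw [h1, hW1]
    simp [one_apply, hinj]
  have hDW : Wᵀ * A * W = diagonal lam := by
    rw [spec, ← mul_assoc, ← mul_assoc, hW1, one_mul, mul_assoc, hW1, mul_one]
  have hcol : ∀ j j' : Fin k, (U₀ᵀ * A * U₀) j j'
      = (Wᵀ * A * W) (e (Fin.castLE hkn j)) (e (Fin.castLE hkn j')) := by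
    intro j j'
    simp [mul_apply, hU₀def, Finset.sum_mul, Finset.mul_sum]
  have hval : trace (A * (U₀ * U₀ᵀ)) =
      ∑ i ∈ Finset.univ.filter (fun i : Fin n => (i : ℕ) < k), lam (e i) := by
    have h1 : trace (A * (U₀ * U₀ᵀ)) = trace (U₀ᵀ * A * U₀) := by
      rw [← Matrix.mul_assoc, trace_mul_cycle]
    have h2 : trace (U₀ᵀ * A * U₀) = ∑ j : Fin k, lam (e (Fin.castLE hkn j)) := by
      calc trace (U₀ᵀ * A * U₀) = ∑ j : Fin k, (U₀ᵀ * A * U₀) j j := rfl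
        _ = ∑ j : Fin k, lam (e (Fin.castLE hkn j)) := by
            refine Finset.sum_congr rfl fun j _ => ?_
            rw [hcol j j, hDW, diagonal_apply_eq]
    rw [h1, h2, myFilter_eq_map hkn, Finset.sum_map]
    rfl
  constructor
  · exact ⟨U₀, hU₀, by rw [hred U₀ hU₀, hval]⟩
  · rintro t ⟨U, hU, rfl⟩
    rw [hred U hU]
    have := hbound U hU
    linarith
end
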